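/- Define, for a sequence (V_j)_{j≥-1} in M_N(ℂ) and θ ∈ M_N(ℂ[x]), P_k(θ) = θ^{(k)}(0)/(k-1)! - (1/2)Σ_{j=0}^{k}[θ^{(j)}(0)/j!, V_{k-1-j}]. Then for all θ_1, θ_2 ∈ M_N(ℂ[x]) and all k ≥ 0: P_k(θ_1θ_2) = Σ_{s=0}^{k} ( P_{k-s}(θ_1)·θ_2^{(s)}(0)/s! + θ_1^{(s)}(0)/s!·P_{k-s}(θ_2) ). -/

import Mathlib

open Polynomial

/-- θ^{(j)}(0) for a matrix of polynomials: the j-th derivative evaluated at 0. -/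
noncomputable def matDerivAtZero {N : ℕ} (θ : Matrix (Fin N) (Fin N) (Polynomial ℂ))
    (j : ℕ) : Matrix (Fin N) (Fin N) ℂ :=
  Matrix.of fun i l => ((derivative^[j] (θ i l)).eval 0)

/-- P_k(θ) = k/k! · θ^{(k)}(0) - (1/2) Σ_{j=0}^{k} [θ^{(j)}(0)/j!, V_{k-1-j}]. -/
noncomputable def Pfam {N : ℕ} (V : ℤ → Matrix (Fin N) (Fin N) ℂ)
    (θ : Matrix (Fin N) (Fin N) (Polynomial ℂ)) (k : ℕ) :
    Matrix (Fin N) (Fin N) ℂ :=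
  ((k : ℂ) / (k.factorial : ℂ)) • matDerivAtZero θ k -
    (1 / 2 : ℂ) • ∑ j ∈ Finset.range (k + 1),
      (((j.factorial : ℂ))⁻¹ • matDerivAtZero θ j * V ((k : ℤ) - 1 - j) -
        V ((k : ℤ) - 1 - j) * ((j.factorial : ℂ))⁻¹ • matDerivAtZero θ j)

open Finset in
lemma matDerivAtZero_mul {N : ℕ} (θ₁ θ₂ : Matrix (Fin N) (Fin N) (Polynomial ℂ)) (j : ℕ) :
    matDerivAtZero (θ₁ * θ₂) j =
      ∑ i ∈ Finset.range (j + 1),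
        (j.choose i) • (matDerivAtZero θ₁ (j - i) * matDerivAtZero θ₂ i) := by
  ext p q
  simp only [matDerivAtZero, Matrix.of_apply, Matrix.mul_apply, Matrix.sum_apply,
    Matrix.smul_apply, Polynomial.iterate_derivative_sum, Polynomial.iterate_derivative_mul,
    Polynomial.eval_finset_sum, Polynomial.eval_smul, Polynomial.eval_mul, Finset.smul_sum,
    Nat.succ_eq_add_one]
  rw [Finset.sum_comm]

lemma conv {N : ℕ} (θ₁ θ₂ : Matrix (Fin N) (Fin N) (Polynomial ℂ)) (j : ℕ) :
    ((j.factorial : ℂ))⁻¹ • matDerivAtZero (θ₁ * θ₂) j =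
      ∑ i ∈ Finset.range (j + 1),
        (((j - i).factorial : ℂ))⁻¹ • matDerivAtZero θ₁ (j - i) *
          ((i.factorial : ℂ))⁻¹ • matDerivAtZero θ₂ i := by
  rw [matDerivAtZero_mul, Finset.smul_sum]
  refine Finset.sum_congr rfl fun i hi => ?_
  rw [Finset.mem_range] at hi
  have hij : i ≤ j := by omega
  rw [← Nat.cast_smul_eq_nsmul ℂ, smul_smul, smul_mul_assoc, mul_smul_comm, smul_smul]
  congr 1
  rw [Nat.cast_choose ℂ hij]
  have h1 : ((j - i).factorial : ℂ) ≠ 0 := Nat.cast_ne_zero.mpr (Nat.factorial_ne_zero _)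
  have h2 : ((i).factorial : ℂ) ≠ 0 := Nat.cast_ne_zero.mpr (Nat.factorial_ne_zero _)
  have h3 : ((j).factorial : ℂ) ≠ 0 := Nat.cast_ne_zero.mpr (Nat.factorial_ne_zero _)
  field_simp

open Finset

/-- Symmetric triangle swap. -/
lemma tri_comm {M : Type*} [AddCommMonoid M] (k : ℕ) (f : ℕ → ℕ → M) :
    ∑ s ∈ range (k+1), ∑ t ∈ range (k - s + 1), f s t
      = ∑ s ∈ range (k+1), ∑ t ∈ range (k - s + 1), f t s := by
  rw [Finset.sum_sigma', Finset.sum_sigma']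
  refine Finset.sum_nbij' (fun x => ⟨x.2, x.1⟩) (fun x => ⟨x.2, x.1⟩) ?_ ?_
    (fun _ _ => rfl) (fun _ _ => rfl) (fun _ _ => rfl) <;>
  simp only [Finset.mem_sigma, Finset.mem_range, Sigma.forall] <;>
  intros <;> omega

/-- Triangle reindexing: row-by-row to column-by-column. -/
lemma tri_swap {M : Type*} [AddCommMonoid M] (k : ℕ) (f : ℕ → ℕ → M) :
    ∑ j ∈ range (k+1), ∑ i ∈ range (j+1), f i j
      = ∑ i ∈ range (k+1), ∑ t ∈ range (k + 1 - i), f i (i + t) := by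
  simp only [Finset.range_eq_Ico]
  rw [← Finset.sum_Ico_Ico_comm]
  refine Finset.sum_congr rfl fun i _ => ?_
  rw [Finset.sum_Ico_eq_sum_range, Finset.range_eq_Ico]

lemma key {M : Type*} [Ring M] [Module ℂ M] [SMulCommClass ℂ M M] [IsScalarTower ℂ M M]
    (a b : ℕ → M) (V : ℤ → M) (k : ℕ) :
    (k:ℂ) • (∑ i ∈ range (k+1), a (k-i) * b i)
      - (1/2:ℂ) • ∑ j ∈ range (k+1),
          ((∑ i ∈ range (j+1), a (j-i) * b i) * V ((k:ℤ)-1-j)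
            - V ((k:ℤ)-1-j) * ∑ i ∈ range (j+1), a (j-i) * b i)
    = ∑ s ∈ range (k+1),
        (((((k-s : ℕ)):ℂ) • a (k-s)
            - (1/2:ℂ) • ∑ j ∈ range ((k-s)+1),
                (a j * V (((k-s:ℕ):ℤ)-1-j) - V (((k-s:ℕ):ℤ)-1-j) * a j)) * b s
          + a s * ((((k-s:ℕ)):ℂ) • b (k-s)
            - (1/2:ℂ) • ∑ j ∈ range ((k-s)+1),
                (b j * V (((k-s:ℕ):ℤ)-1-j) - V (((k-s:ℕ):ℤ)-1-j) * b j))) := by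
  -- derivative part
  have h1 : (∑ s ∈ range (k+1), ((k-s:ℕ):ℂ) • (a (k-s) * b s))
      + (∑ s ∈ range (k+1), ((k-s:ℕ):ℂ) • (a s * b (k-s)))
      = (k:ℂ) • ∑ i ∈ range (k+1), a (k-i) * b i := by
    have h2 : ∑ s ∈ range (k+1), ((k-s:ℕ):ℂ) • (a s * b (k-s))
        = ∑ s ∈ range (k+1), ((s:ℕ):ℂ) • (a (k-s) * b s) := by
      rw [← Finset.sum_range_reflect]
      refine Finset.sum_congr rfl fun s hs => ?_
      rw [Finset.mem_range] at hs
      have e1 : k + 1 - 1 - s = k - s := by omega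
      have e2 : k - (k - s) = s := by omega
      rw [e1, e2]
    rw [h2, ← Finset.sum_add_distrib, Finset.smul_sum]
    refine Finset.sum_congr rfl fun s hs => ?_
    rw [Finset.mem_range] at hs
    rw [← add_smul]
    congr 1
    have : ((k - s : ℕ):ℂ) = (k:ℂ) - s := by
      rw [Nat.cast_sub (by omega)]
    rw [this]; ring
  -- commutator part
  have hS : ∑ j ∈ range (k+1),
        ((∑ i ∈ range (j+1), a (j-i) * b i) * V ((k:ℤ)-1-j)
          - V ((k:ℤ)-1-j) * ∑ i ∈ range (j+1), a (j-i) * b i)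
      = (∑ s ∈ range (k+1),
          (∑ j ∈ range ((k-s)+1),
            (a j * V (((k-s:ℕ):ℤ)-1-j) - V (((k-s:ℕ):ℤ)-1-j) * a j)) * b s)
        + ∑ s ∈ range (k+1),
            a s * (∑ j ∈ range ((k-s)+1),
              (b j * V (((k-s:ℕ):ℤ)-1-j) - V (((k-s:ℕ):ℤ)-1-j) * b j)) := by
    have expand : ∀ j ∈ range (k+1),
        ((∑ i ∈ range (j+1), a (j-i) * b i) * V ((k:ℤ)-1-j)
          - V ((k:ℤ)-1-j) * ∑ i ∈ range (j+1), a (j-i) * b i)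
        = ∑ i ∈ range (j+1),
            ((a (j-i) * V ((k:ℤ)-1-j) - V ((k:ℤ)-1-j) * a (j-i)) * b i
              + a (j-i) * (b i * V ((k:ℤ)-1-j) - V ((k:ℤ)-1-j) * b i)) := by
      intro j _
      rw [Finset.sum_mul, Finset.mul_sum, ← Finset.sum_sub_distrib]
      refine Finset.sum_congr rfl fun i _ => ?_
      noncomm_ring
    rw [Finset.sum_congr rfl expand, tri_swap]
    have step : ∀ s ∈ range (k+1),
        (∑ t ∈ range (k + 1 - s),
          ((a (s + t - s) * V ((k:ℤ)-1-((s+t : ℕ):ℤ)) - V ((k:ℤ)-1-((s+t : ℕ):ℤ)) * a (s + t - s)) * b s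
            + a (s + t - s) * (b s * V ((k:ℤ)-1-((s+t : ℕ):ℤ)) - V ((k:ℤ)-1-((s+t : ℕ):ℤ)) * b s)))
        = (∑ t ∈ range ((k-s)+1),
            (a t * V (((k-s:ℕ):ℤ)-1-t) - V (((k-s:ℕ):ℤ)-1-t) * a t)) * b s
          + ∑ t ∈ range ((k-s)+1),
              a t * (b s * V ((k:ℤ)-1-((s+t : ℕ):ℤ)) - V ((k:ℤ)-1-((s+t : ℕ):ℤ)) * b s) := by
      intro s hs
      rw [Finset.mem_range] at hs
      have hrange : k + 1 - s = (k - s) + 1 := by omega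
      rw [hrange, Finset.sum_add_distrib, Finset.sum_mul]
      congr 1
      · refine Finset.sum_congr rfl fun t ht => ?_
        rw [Finset.mem_range] at ht
        have e1 : s + t - s = t := by omega
        have e2 : (k:ℤ)-1-((s+t:ℕ):ℤ) = ((k-s:ℕ):ℤ)-1-t := by
          rw [Nat.cast_sub (by omega)]
          push_cast; ring
        rw [e1, e2]
      · refine Finset.sum_congr rfl fun t ht => ?_
        have e1 : s + t - s = t := by omega
        rw [e1]
    rw [Finset.sum_congr rfl step, Finset.sum_add_distrib]
    congr 1
    -- second part: symmetric triangle swap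
    rw [tri_comm k (fun s t => a t * (b s * V ((k:ℤ)-1-((s+t : ℕ):ℤ)) - V ((k:ℤ)-1-((s+t : ℕ):ℤ)) * b s))]
    refine Finset.sum_congr rfl fun s hs => ?_
    rw [Finset.mem_range] at hs
    rw [Finset.mul_sum]
    refine Finset.sum_congr rfl fun t ht => ?_
    rw [Finset.mem_range] at ht
    have e2 : (k:ℤ)-1-((t+s:ℕ):ℤ) = ((k-s:ℕ):ℤ)-1-t := by
      rw [Nat.cast_sub (by omega)]
      push_cast; ring
    rw [e2]
  rw [hS]
  simp only [sub_mul, mul_sub, smul_mul_assoc, mul_smul_comm, Finset.sum_add_distrib,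
    Finset.sum_sub_distrib, ← Finset.smul_sum]
  rw [← h1, smul_add]
  abel

theorem Pfam_product_formula {N : ℕ} (V : ℤ → Matrix (Fin N) (Fin N) ℂ)
    (θ₁ θ₂ : Matrix (Fin N) (Fin N) (Polynomial ℂ)) (k : ℕ) :
    Pfam V (θ₁ * θ₂) k =
      ∑ s ∈ Finset.range (k + 1),
        (Pfam V θ₁ (k - s) * ((s.factorial : ℂ))⁻¹ • matDerivAtZero θ₂ s +
          ((s.factorial : ℂ))⁻¹ • matDerivAtZero θ₁ s * Pfam V θ₂ (k - s)) := by
  have hP : ∀ (θ : Matrix (Fin N) (Fin N) (Polynomial ℂ)) (m : ℕ),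
      Pfam V θ m = (m:ℂ) • (((m.factorial : ℂ))⁻¹ • matDerivAtZero θ m)
        - (1/2:ℂ) • ∑ j ∈ Finset.range (m + 1),
            (((j.factorial : ℂ))⁻¹ • matDerivAtZero θ j * V ((m : ℤ) - 1 - j)
              - V ((m : ℤ) - 1 - j) * ((j.factorial : ℂ))⁻¹ • matDerivAtZero θ j) := by
    intro θ m
    rw [Pfam]
    congr 1
    rw [div_eq_mul_inv, mul_smul]
  simp only [hP, conv]
  exact key (fun i => ((i.factorial : ℂ))⁻¹ • matDerivAtZero θ₁ i)
    (fun i => ((i.factorial : ℂ))⁻¹ • matDerivAtZero θ₂ i) V k
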